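/- Let G be a graph whose vertex set is partitioned into disjoint sets W, V_1, ..., V_r with r ≥ 2 and |V_i| ≥ 2 for all i. If the induced subgraph G[W ∪ V_i ∪ V_j] is prime for all distinct i and j, then G is prime. -/

import Mathlib

variable {V : Type*}

/-- A split of a simple graph. -/
def IsSplit (G : SimpleGraph V) (A B : Set V) : Prop :=
  A ∪ B = Set.univ ∧ Disjoint A B ∧ 2 ≤ A.ncard ∧ 2 ≤ B.ncard ∧
    ∃ A' B', A' ⊆ A ∧ B' ⊆ B ∧ ∀ x ∈ A, ∀ y ∈ B, (G.Adj x y ↔ (x ∈ A' ∧ y ∈ B'))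

/-- A graph is prime if it has no split. -/
def IsPrime (G : SimpleGraph V) : Prop := ¬ ∃ A B : Set V, IsSplit G A B

/-- Local complementation at a vertex. -/
def localComp (G : SimpleGraph V) (v : V) : SimpleGraph V where
  Adj x y := x ≠ y ∧ Xor' (G.Adj x y) (G.Adj v x ∧ G.Adj v y)
  symm := by
    constructor
    intro x y h
    refine ⟨h.1.symm, ?_⟩
    rw [SimpleGraph.adj_comm, and_comm]
    exact h.2
  loopless := by constructor; intro x h; exact h.1 rfl

/-- Pivoting an edge: G ∧ vw = G*v*w*v. -/
def pivot (G : SimpleGraph V) (v w : V) : SimpleGraph V :=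
  localComp (localComp (localComp G v) w) v

/-- Vertex deletion. -/
def deleteVert (G : SimpleGraph V) (v : V) : SimpleGraph {x : V // x ≠ v} :=
  G.induce {x | x ≠ v}

/-- Two vertices are twins if every other vertex is adjacent to one iff to the other. -/
def Twins (G : SimpleGraph V) (u w : V) : Prop :=
  ∀ x, x ≠ u → x ≠ w → (G.Adj x u ↔ G.Adj x w)

open Finset in
lemma biUnion_ncard_le' {α ι : Type*} [DecidableEq ι] (t : Finset ι) (s : ι → Set α) :
    (⋃ i ∈ t, s i).ncard ≤ ∑ i ∈ t, (s i).ncard := by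
  induction t using Finset.induction with
  | empty => simp
  | insert _ _ ha ih =>
    rename_i a t
    rw [Finset.sum_insert ha]
    calc (⋃ i ∈ insert a t, s i).ncard = (s a ∪ ⋃ i ∈ t, s i).ncard := by
          rw [Finset.set_biUnion_insert]
      _ ≤ (s a).ncard + (⋃ i ∈ t, s i).ncard := Set.ncard_union_le _ _
      _ ≤ _ := by omega

lemma key_half' {r : ℕ} (hr : 2 ≤ r) (aW bW : ℕ) (a b : Fin r → ℕ)
    (hab : ∀ i, 2 ≤ a i + b i)
    (hA : 2 ≤ aW + ∑ i, a i)
    (k : Fin r) (hk : a k = 0) :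
    ∃ i j, i ≠ j ∧ 2 ≤ aW + a i + a j ∧ 2 ≤ bW + b i + b j := by
  by_cases h : ∃ j, j ≠ k ∧ 2 ≤ aW + a j
  · obtain ⟨j, hjk, hj⟩ := h
    exact ⟨k, j, fun e => hjk e.symm, by omega, by have := hab k; omega⟩
  · push_neg at h
    have haW : aW ≤ 1 := by
      obtain ⟨j, hjk⟩ : ∃ j : Fin r, j ≠ k := by
        refine ⟨if k.val = 0 then ⟨1, by omega⟩ else ⟨0, by omega⟩, ?_⟩
        split <;> (rename_i hkv; simp [Fin.ext_iff]; omega)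
      have := h j hjk; omega
    have ha1 : ∀ j, a j ≤ 1 := by
      intro j
      by_cases hj : j = k
      · simp [hj, hk]
      · have := h j hj; omega
    by_cases haW0 : aW = 0
    · have hsum : 2 ≤ ∑ i, a i := by omega
      set s := Finset.univ.filter (fun i => a i ≠ 0) with hs
      have hcard : 2 ≤ s.card := by
        have : ∑ i, a i ≤ s.card := by
          calc ∑ i, a i = ∑ i ∈ s, a i := by
                rw [hs]; exact (Finset.sum_filter_ne_zero _).symm
            _ ≤ ∑ _i ∈ s, 1 := Finset.sum_le_sum (fun i _ => ha1 i)
            _ = s.card := by simp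
        omega
      obtain ⟨i, hi, j, hj, hij⟩ := Finset.one_lt_card.mp hcard
      simp only [hs, Finset.mem_filter] at hi hj
      refine ⟨i, j, hij, by omega, ?_⟩
      have h1 := hab i; have h2 := hab j
      have := ha1 i; have := ha1 j; omega
    · have haW1 : aW = 1 := by omega
      have hz : ∀ j, a j = 0 := by
        intro j
        by_cases hj : j = k
        · simp [hj, hk]
        · have := h j hj; omega
      have : ∑ i, a i = 0 := Finset.sum_eq_zero (fun i _ => hz i)
      omega

lemma key' {r : ℕ} (hr : 2 ≤ r) (aW bW : ℕ) (a b : Fin r → ℕ)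
    (hab : ∀ i, 2 ≤ a i + b i)
    (hA : 2 ≤ aW + ∑ i, a i) (hB : 2 ≤ bW + ∑ i, b i) :
    ∃ i j, i ≠ j ∧ 2 ≤ aW + a i + a j ∧ 2 ≤ bW + b i + b j := by
  by_cases h1 : ∃ k, a k = 0
  · obtain ⟨k, hk⟩ := h1; exact key_half' hr aW bW a b hab hA k hk
  · by_cases h2 : ∃ k, b k = 0
    · obtain ⟨k, hk⟩ := h2
      obtain ⟨i, j, hij, hx, hy⟩ :=
        key_half' hr bW aW b a (fun i => by have := hab i; omega) hB k hk
      exact ⟨i, j, hij, hy, hx⟩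
    · push_neg at h1; push_neg at h2
      refine ⟨⟨0, by omega⟩, ⟨1, by omega⟩, by simp [Fin.ext_iff], ?_, ?_⟩
      · have := h1 ⟨0, by omega⟩; have := h1 ⟨1, by omega⟩; omega
      · have := h2 ⟨0, by omega⟩; have := h2 ⟨1, by omega⟩; omega

/-- If the vertex set of G is partitioned into W, V_1, …, V_r with r ≥ 2 and
|V_i| ≥ 2 for all i, and G[W ∪ V_i ∪ V_j] is prime for all distinct i, j, then G is prime. -/
theorem prime_of_prime_parts {V : Type*} [Finite V] (G : SimpleGraph V)
    (r : ℕ) (hr : 2 ≤ r) (W : Set V) (P : Fin r → Set V)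
    (hWP : ∀ i, Disjoint W (P i)) (hPP : Pairwise (Function.onFun Disjoint P))
    (hcover : W ∪ (⋃ i, P i) = Set.univ)
    (hcard : ∀ i, 2 ≤ (P i).ncard)
    (hprime : ∀ i j, i ≠ j → IsPrime (G.induce (W ∪ P i ∪ P j))) :
    IsPrime G := by
  classical
  rintro ⟨A, B, hunion, hdisj, hA2, hB2, A', B', hA'sub, hB'sub, hadj⟩
  set a : Fin r → ℕ := fun i => (A ∩ P i).ncard with ha_def
  set b : Fin r → ℕ := fun i => (B ∩ P i).ncard with hb_def
  have hab : ∀ i, 2 ≤ a i + b i := by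
    intro i
    have hsub : P i ⊆ (A ∩ P i) ∪ (B ∩ P i) := by
      intro x hx
      have : x ∈ A ∪ B := hunion ▸ Set.mem_univ x
      rcases this with h | h
      · exact Or.inl ⟨h, hx⟩
      · exact Or.inr ⟨h, hx⟩
    calc 2 ≤ (P i).ncard := hcard i
      _ ≤ ((A ∩ P i) ∪ (B ∩ P i)).ncard := Set.ncard_le_ncard hsub (Set.toFinite _)
      _ ≤ a i + b i := Set.ncard_union_le _ _
  have hbound : ∀ S : Set V, S.ncard ≤ (S ∩ W).ncard + ∑ i, (S ∩ P i).ncard := by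
    intro S
    have hsub : S ⊆ (S ∩ W) ∪ ⋃ i ∈ Finset.univ, (S ∩ P i) := by
      intro x hx
      have : x ∈ W ∪ ⋃ i, P i := hcover ▸ Set.mem_univ x
      rcases this with h | h
      · exact Or.inl ⟨hx, h⟩
      · obtain ⟨i, hi⟩ := Set.mem_iUnion.mp h
        exact Or.inr (Set.mem_biUnion (Finset.mem_univ i) ⟨hx, hi⟩)
    calc S.ncard ≤ ((S ∩ W) ∪ ⋃ i ∈ Finset.univ, (S ∩ P i)).ncard :=
          Set.ncard_le_ncard hsub (Set.toFinite _)
      _ ≤ (S ∩ W).ncard + (⋃ i ∈ Finset.univ, (S ∩ P i)).ncard := Set.ncard_union_le _ _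
      _ ≤ (S ∩ W).ncard + ∑ i, (S ∩ P i).ncard := by
          have := biUnion_ncard_le' Finset.univ (fun i => S ∩ P i); omega
  obtain ⟨i, j, hij, hAij, hBij⟩ := key' hr (A ∩ W).ncard (B ∩ W).ncard a b hab
    (le_trans hA2 (hbound A)) (le_trans hB2 (hbound B))
  simp only [ha_def, hb_def] at hAij hBij
  apply hprime i j hij
  set X : Set V := W ∪ P i ∪ P j with hX
  -- cardinality of restriction
  have hrestr : ∀ S : Set V, (S ∩ W).ncard + (S ∩ P i).ncard + (S ∩ P j).ncard
      ≤ (S ∩ X).ncard := by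
    intro S
    have hSX : (S ∩ W) ∪ (S ∩ P i) ∪ (S ∩ P j) ⊆ S ∩ X := by
      rw [hX]
      intro x hx
      rcases hx with (h | h) | h
      · exact ⟨h.1, Or.inl (Or.inl h.2)⟩
      · exact ⟨h.1, Or.inl (Or.inr h.2)⟩
      · exact ⟨h.1, Or.inr h.2⟩
    have hd1 : Disjoint (S ∩ W) (S ∩ P i) :=
      Disjoint.mono Set.inter_subset_right Set.inter_subset_right (hWP i)
    have hd2 : Disjoint ((S ∩ W) ∪ (S ∩ P i)) (S ∩ P j) := by
      refine Set.disjoint_union_left.mpr ⟨?_, ?_⟩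
      · exact Disjoint.mono Set.inter_subset_right Set.inter_subset_right (hWP j)
      · exact Disjoint.mono Set.inter_subset_right Set.inter_subset_right (hPP hij)
    calc (S ∩ W).ncard + (S ∩ P i).ncard + (S ∩ P j).ncard
        = ((S ∩ W) ∪ (S ∩ P i)).ncard + (S ∩ P j).ncard := by
          rw [Set.ncard_union_eq hd1 (Set.toFinite _) (Set.toFinite _)]
      _ = ((S ∩ W) ∪ (S ∩ P i) ∪ (S ∩ P j)).ncard := by
          rw [Set.ncard_union_eq hd2 (Set.toFinite _) (Set.toFinite _)]
      _ ≤ (S ∩ X).ncard := Set.ncard_le_ncard hSX (Set.toFinite _)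
  have hpre : ∀ S : Set V, (Subtype.val ⁻¹' S : Set X).ncard = (S ∩ X).ncard := by
    intro S
    rw [← Set.ncard_image_of_injective (Subtype.val ⁻¹' S) Subtype.val_injective,
      Subtype.image_preimage_coe]
    congr 1
    exact Set.inter_comm _ _
  refine ⟨Subtype.val ⁻¹' A, Subtype.val ⁻¹' B, ?_, ?_, ?_, ?_,
    Subtype.val ⁻¹' A', Subtype.val ⁻¹' B',
    Set.preimage_mono hA'sub, Set.preimage_mono hB'sub, ?_⟩
  · rw [← Set.preimage_union, hunion]; simp
  · exact hdisj.preimage Subtype.val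
  · rw [hpre]; have := hrestr A; omega
  · rw [hpre]; have := hrestr B; omega
  · intro x hx y hy
    exact hadj x hx y hy
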